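/- For each integer p ≥ 3, the Hecke group Γ = Δ(p,2,∞) ≅ C_p * C_2 has uncountably many conjugacy classes of nonparabolic maximal subgroups; that is, the set of conjugacy classes of subgroups of Γ that contain no parabolic element and are maximal proper subgroups of Γ is uncountable. -/

import Mathlib

def triangleRels (p q : ℕ) : Set (FreeGroup (Fin 2)) :=
  {FreeGroup.of 0 ^ p, FreeGroup.of 1 ^ q}

/-- The triangle group Δ(p,q,∞) = ⟨X, Y ∣ X^p = Y^q = 1⟩ ≅ C_p * C_q. -/
abbrev Tri (p q : ℕ) : Type := PresentedGroup (triangleRels p q)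

def triX (p q : ℕ) : Tri p q := PresentedGroup.of 0
def triY (p q : ℕ) : Tri p q := PresentedGroup.of 1
def triZ (p q : ℕ) : Tri p q := (triX p q * triY p q)⁻¹

/-- An element is parabolic if it is conjugate to a nonzero power of Z. -/
def IsParabolic {p q : ℕ} (g : Tri p q) : Prop :=
  ∃ (k : ℤ) (c : Tri p q), k ≠ 0 ∧ g = c * (triZ p q) ^ k * c⁻¹

/-- A subgroup is nonparabolic if it contains no parabolic element. -/
def Nonparabolic {p q : ℕ} (M : Subgroup (Tri p q)) : Prop :=
  ∀ g ∈ M, ¬ IsParabolic g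

/-- A Neumann subgroup: a complement to P = ⟨Z⟩, i.e. M ∩ P = 1 and MP = Γ. -/
def IsNeumann {p q : ℕ} (M : Subgroup (Tri p q)) : Prop :=
  M ⊓ Subgroup.zpowers (triZ p q) = ⊥ ∧
  ∀ g : Tri p q, ∃ m ∈ M, ∃ k : ℤ, g = m * (triZ p q) ^ k

/-- Conjugacy of subgroups (restricted to those satisfying a property `P`). -/
def conjRel {G : Type*} [Group G] (P : Subgroup G → Prop)
    (M N : {M : Subgroup G // P M}) : Prop :=
  ∃ g : G, (N : Subgroup G) = Subgroup.map (MulAut.conj g).toMonoidHom (M : Subgroup G)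

noncomputable section
namespace HK
open Function

/-- positions of "left" steps: `4^(i+1) + bit`. -/
def sfun (β : ℕ → Bool) (i : ℕ) : ℕ := 4 ^ (i + 1) + (bif β i then 1 else 0)

lemma bit_le (b : Bool) : (bif b then 1 else 0) ≤ 1 := by cases b <;> simp

lemma four_pow_ge (i : ℕ) : i + 4 ≤ 4 ^ (i + 1) := by
  induction i with
  | zero => norm_num
  | succ n ih =>
    have : 4 ^ (n + 2) = 4 * 4 ^ (n + 1) := by ring
    omega

lemma sfun_strictMono (β : ℕ → Bool) : StrictMono (sfun β) := by
  apply strictMono_nat_of_lt_succ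
  intro n
  have h1 : n + 4 ≤ 4 ^ (n + 1) := four_pow_ge n
  have h0 : 4 ^ (n + 2) = 4 * 4 ^ (n + 1) := by ring
  have h2 := bit_le (β n)
  have h3 := bit_le (β (n + 1))
  unfold sfun
  omega

lemma lt_sfun (β : ℕ → Bool) (i : ℕ) : i + 3 < sfun β i := by
  have h1 := four_pow_ge i
  have hb := bit_le (β i)
  unfold sfun
  omega

def isL (β : ℕ → Bool) (k : ℕ) : Prop := ∃ i, sfun β i = k

instance (β : ℕ → Bool) : DecidablePred (isL β) := fun k =>
  decidable_of_iff (∃ i < k, sfun β i = k) (by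
    constructor
    · rintro ⟨i, _, h⟩; exact ⟨i, h⟩
    · rintro ⟨i, h⟩
      exact ⟨i, by have := lt_sfun β i; omega, h⟩)

variable (p : ℕ) (β : ℕ → Bool)

/-- (L k, R k) : the occupied interval after k steps. -/
def LR : ℕ → ℤ × ℤ
  | 0 => (0, 0)
  | (k+1) =>
    if isL β (k+1) then ((LR k).1 - ((p:ℤ) - 1), (LR k).2 + 1)
    else ((LR k).1 - 1, (LR k).2 + ((p:ℤ) - 1))

def Lf (k : ℕ) : ℤ := (LR p β k).1
def Rf (k : ℕ) : ℤ := (LR p β k).2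

lemma Lf_zero : Lf p β 0 = 0 := rfl
lemma Rf_zero : Rf p β 0 = 0 := rfl

lemma Lf_succ_left (k : ℕ) (h : isL β (k+1)) : Lf p β (k+1) = Lf p β k - ((p:ℤ) - 1) := by
  simp [Lf, LR, h]
lemma Rf_succ_left (k : ℕ) (h : isL β (k+1)) : Rf p β (k+1) = Rf p β k + 1 := by
  simp [Rf, LR, h]
lemma Lf_succ_right (k : ℕ) (h : ¬ isL β (k+1)) : Lf p β (k+1) = Lf p β k - 1 := by
  simp [Lf, LR, h]
lemma Rf_succ_right (k : ℕ) (h : ¬ isL β (k+1)) : Rf p β (k+1) = Rf p β k + ((p:ℤ) - 1) := by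
  simp [Rf, LR, h]

lemma Lf_succ_lt (hp : 3 ≤ p) (k : ℕ) : Lf p β (k+1) < Lf p β k := by
  by_cases h : isL β (k+1)
  · rw [Lf_succ_left p β k h]
    have : (3:ℤ) ≤ (p:ℤ) := by exact_mod_cast hp
    omega
  · rw [Lf_succ_right p β k h]; omega

lemma Rf_lt_succ (hp : 3 ≤ p) (k : ℕ) : Rf p β k < Rf p β (k+1) := by
  by_cases h : isL β (k+1)
  · rw [Rf_succ_left p β k h]; omega
  · rw [Rf_succ_right p β k h]
    have : (3:ℤ) ≤ (p:ℤ) := by exact_mod_cast hp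
    omega

lemma Lf_strictAnti (hp : 3 ≤ p) : StrictAnti (Lf p β) :=
  strictAnti_nat_of_succ_lt (Lf_succ_lt p β hp)

lemma Rf_strictMono (hp : 3 ≤ p) : StrictMono (Rf p β) :=
  strictMono_nat_of_lt_succ (Rf_lt_succ p β hp)

lemma Lf_le_neg (hp : 3 ≤ p) (k : ℕ) : Lf p β k ≤ -(k:ℤ) := by
  induction k with
  | zero => simp [Lf_zero]
  | succ n ih =>
    have h := Lf_succ_lt p β hp n
    push_cast
    omega

lemma le_Rf (hp : 3 ≤ p) (k : ℕ) : (k:ℤ) ≤ Rf p β k := by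
  induction k with
  | zero => simp [Rf_zero]
  | succ n ih =>
    have h := Rf_lt_succ p β hp n
    push_cast
    omega

lemma Lf_nonpos (hp : 3 ≤ p) (k : ℕ) : Lf p β k ≤ 0 := le_trans (Lf_le_neg p β hp k) (by omega)
lemma Rf_nonneg (hp : 3 ≤ p) (k : ℕ) : 0 ≤ Rf p β k := le_trans (by omega) (le_Rf p β hp k)


open scoped Classical in
/-- the permutation of ℤ (as a function). -/
def xf (n : ℤ) : ℤ :=
  if h : ∃ k, Lf p β k = n then Rf p β h.choose
  else if h : ∃ k, Rf p β k + 1 = n then Lf p β h.choose - 1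
  else n - 1

lemma xf_L (k : ℕ) (hp : 3 ≤ p) : xf p β (Lf p β k) = Rf p β k := by
  have h : ∃ j, Lf p β j = Lf p β k := ⟨k, rfl⟩
  rw [xf, dif_pos h]
  congr 1
  exact (Lf_strictAnti p β hp).injective h.choose_spec

lemma xf_Q (k : ℕ) (hp : 3 ≤ p) : xf p β (Rf p β k + 1) = Lf p β k - 1 := by
  have h0 : ¬ ∃ j, Lf p β j = Rf p β k + 1 := by
    rintro ⟨j, hj⟩
    have h1 := Lf_nonpos p β hp j
    have h2 := Rf_nonneg p β hp k
    omega
  have h : ∃ j, Rf p β j + 1 = Rf p β k + 1 := ⟨k, rfl⟩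
  rw [xf, dif_neg h0, dif_pos h]
  have : Rf p β h.choose + 1 = Rf p β k + 1 := h.choose_spec
  have := (Rf_strictMono p β hp).injective (by omega : Rf p β h.choose = Rf p β k)
  rw [this]

lemma xf_D (n : ℤ) (h1 : ∀ k, Lf p β k ≠ n) (h2 : ∀ k, Rf p β k + 1 ≠ n) :
    xf p β n = n - 1 := by
  rw [xf, dif_neg (by push_neg; exact h1), dif_neg (by push_neg; exact h2)]

lemma xf_descent_pos (k : ℕ) (n : ℤ) (hp : 3 ≤ p)
    (h1 : Rf p β k + 1 < n) (h2 : n ≤ Rf p β (k+1)) : xf p β n = n - 1 := by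
  apply xf_D
  · intro j
    have := Lf_nonpos p β hp j
    have := Rf_nonneg p β hp k
    omega
  · intro j
    rcases le_or_gt j k with hj | hj
    · have : Rf p β j ≤ Rf p β k := (Rf_strictMono p β hp).monotone hj
      omega
    · have : Rf p β (k+1) ≤ Rf p β j := (Rf_strictMono p β hp).monotone hj
      omega

lemma xf_descent_neg (k : ℕ) (n : ℤ) (hp : 3 ≤ p)
    (h1 : Lf p β (k+1) < n) (h2 : n < Lf p β k) : xf p β n = n - 1 := by
  apply xf_D
  · intro j
    rcases le_or_gt j k with hj | hj
    · have : Lf p β k ≤ Lf p β j := (Lf_strictAnti p β hp).antitone hj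
      omega
    · have : Lf p β j ≤ Lf p β (k+1) := (Lf_strictAnti p β hp).antitone hj
      omega
  · intro j
    have := Rf_nonneg p β hp j
    have := Lf_nonpos p β hp k
    omega

lemma keyE (n : ℤ) (hp : 3 ≤ p) : xf p β (xf p β n + 1) = n - 1 := by
  by_cases hL : ∃ k, Lf p β k = n
  · obtain ⟨k, hk⟩ := hL
    rw [← hk, xf_L p β k hp, xf_Q p β k hp]
  · by_cases hQ : ∃ k, Rf p β k + 1 = n
    · obtain ⟨k, hk⟩ := hQ
      rw [← hk, xf_Q p β k hp]
      have : Lf p β k - 1 + 1 = Lf p β k := by ring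
      rw [this, xf_L p β k hp]
      omega
    · push_neg at hL hQ
      rw [xf_D p β n hL hQ]
      have : n - 1 + 1 = n := by ring
      rw [this, xf_D p β n hL hQ]

lemma it_right (k : ℕ) (hp : 3 ≤ p) (hk : ¬ isL β (k+1)) :
    ∀ i : ℕ, i ≤ p - 2 → (xf p β)^[i] (Rf p β (k+1)) = Rf p β (k+1) - i := by
  intro i
  induction i with
  | zero => simp
  | succ m ih =>
    intro hm
    have hm' : m ≤ p - 2 := by omega
    rw [Function.iterate_succ_apply', ih hm']
    have hmz : (m:ℤ) ≤ (p:ℤ) - 3 := by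
      have : m + 1 ≤ p - 2 := hm
      have : (3:ℤ) ≤ (p:ℤ) := by exact_mod_cast hp
      push_cast
      omega
    have hR := Rf_succ_right p β k hk
    rw [xf_descent_pos p β k _ hp (by omega) (by omega)]
    push_cast
    ring

lemma it_left (k : ℕ) (hp : 3 ≤ p) (hk : isL β (k+1)) :
    ∀ i : ℕ, i ≤ p - 3 → (xf p β)^[2+i] (Lf p β (k+1)) = Lf p β k - 1 - i := by
  have h3 : (3:ℤ) ≤ (p:ℤ) := by exact_mod_cast hp
  have hL := Lf_succ_left p β k hk
  have hR := Rf_succ_left p β k hk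
  have step2 : (xf p β)^[2] (Lf p β (k+1)) = Lf p β k - 1 := by
    have : (xf p β)^[2] (Lf p β (k+1)) = xf p β (xf p β (Lf p β (k+1))) := by
      rw [Function.iterate_succ_apply', Function.iterate_one]
    rw [this, xf_L p β (k+1) hp, hR, xf_Q p β k hp]
  intro i
  induction i with
  | zero => simpa using step2
  | succ m ih =>
    intro hm
    have hm' : m ≤ p - 3 := by omega
    have hmz : (m:ℤ) ≤ (p:ℤ) - 4 := by
      have : m + 1 ≤ p - 3 := hm
      push_cast
      omega
    have : 2 + (m+1) = (2+m) + 1 := by omega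
    rw [this, Function.iterate_succ_apply', ih hm']
    rw [xf_descent_neg p β k _ hp (by omega) (by omega)]
    push_cast
    ring

lemma iter_split (f : ℤ → ℤ) (a b c : ℕ) (h : a = b + c) (x : ℤ) :
    f^[a] x = f^[b] (f^[c] x) := by
  subst h
  rw [Function.iterate_add_apply]

lemma iterA (k : ℕ) (hp : 3 ≤ p) : (xf p β)^[p] (Lf p β k) = Lf p β k := by
  have h3 : (3:ℤ) ≤ (p:ℤ) := by exact_mod_cast hp
  cases k with
  | zero =>
    have h0 : xf p β (Lf p β 0) = Lf p β 0 := by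
      rw [xf_L p β 0 hp]; rfl
    rw [show (Lf p β 0) = 0 from rfl] at h0 ⊢
    exact Function.iterate_fixed h0 p
  | succ k =>
    by_cases hk : isL β (k+1)
    · -- left step
      have hL := Lf_succ_left p β k hk
      have hitl := it_left p β k hp hk (p-3) le_rfl
      have hcast : ((p:ℤ) - 3) = ((p-3 : ℕ) : ℤ) := by push_cast; omega
      rw [iter_split (xf p β) p 1 (2 + (p-3)) (by omega), Function.iterate_one, hitl]
      have harg : Lf p β k - 1 - ((p-3:ℕ):ℤ) = Lf p β (k+1) + 1 := by
        rw [← hcast]; omega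
      rw [harg, xf_descent_neg p β k _ hp (by omega) (by omega)]
      omega
    · -- right step
      have hL := Lf_succ_right p β k hk
      have hR := Rf_succ_right p β k hk
      have hitr := it_right p β k hp hk (p-2) le_rfl
      have hcast : ((p:ℤ) - 2) = ((p-2 : ℕ) : ℤ) := by push_cast; omega
      rw [iter_split (xf p β) p 1 ((p-2) + 1) (by omega), Function.iterate_one,
        iter_split (xf p β) ((p-2)+1) (p-2) 1 rfl, Function.iterate_one,
        xf_L p β (k+1) hp, hitr]
      have harg : Rf p β (k+1) - ((p-2:ℕ):ℤ) = Rf p β k + 1 := by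
        rw [← hcast]; omega
      rw [harg, xf_Q p β k hp]
      omega

lemma cover (n : ℤ) (hp : 3 ≤ p) : ∃ k a, a < p ∧ (xf p β)^[a] (Lf p β k) = n := by
  have h3 : (3:ℤ) ≤ (p:ℤ) := by exact_mod_cast hp
  rcases lt_trichotomy n 0 with hn | hn | hn
  · -- negative
    have hex : ∃ k, Lf p β k ≤ n := by
      refine ⟨n.natAbs, ?_⟩
      have := Lf_le_neg p β hp n.natAbs
      omega
    classical
    have hk : Lf p β (Nat.find hex) ≤ n := Nat.find_spec hex
    have hkpos : Nat.find hex ≠ 0 := by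
      intro h0
      rw [h0] at hk
      have : Lf p β 0 = 0 := rfl
      omega
    obtain ⟨k', hkeq⟩ : ∃ k', Nat.find hex = k' + 1 :=
      ⟨Nat.find hex - 1, by omega⟩
    rw [hkeq] at hk
    have hk' : ¬ Lf p β k' ≤ n := Nat.find_min hex (by omega)
    push_neg at hk'
    by_cases hkl : isL β (k'+1)
    · rcases eq_or_lt_of_le hk with heq | hlt
      · exact ⟨k'+1, 0, by omega, heq⟩
      · have hL := Lf_succ_left p β k' hkl
        refine ⟨k'+1, 2 + (Lf p β k' - 1 - n).toNat, by omega, ?_⟩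
        rw [it_left p β k' hp hkl _ (by omega)]
        omega
    · have hL := Lf_succ_right p β k' hkl
      have : n = Lf p β (k'+1) := by omega
      exact ⟨k'+1, 0, by omega, this.symm⟩
  · exact ⟨0, 0, by omega, hn.symm⟩
  · -- positive
    have hex : ∃ k, n ≤ Rf p β k := by
      refine ⟨n.toNat, ?_⟩
      have := le_Rf p β hp n.toNat
      omega
    classical
    have hk : n ≤ Rf p β (Nat.find hex) := Nat.find_spec hex
    have hkpos : Nat.find hex ≠ 0 := by
      intro h0
      rw [h0] at hk
      have : Rf p β 0 = 0 := rfl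
      omega
    obtain ⟨k', hkeq⟩ : ∃ k', Nat.find hex = k' + 1 :=
      ⟨Nat.find hex - 1, by omega⟩
    rw [hkeq] at hk
    have hk' : ¬ n ≤ Rf p β k' := Nat.find_min hex (by omega)
    push_neg at hk'
    by_cases hkl : isL β (k'+1)
    · have hR := Rf_succ_left p β k' hkl
      refine ⟨k'+1, 1, by omega, ?_⟩
      rw [Function.iterate_one, xf_L p β (k'+1) hp]
      omega
    · have hR := Rf_succ_right p β k' hkl
      refine ⟨k'+1, 1 + (Rf p β (k'+1) - n).toNat, by omega, ?_⟩
      rw [iter_split (xf p β) _ ((Rf p β (k'+1) - n).toNat) 1 (by omega), Function.iterate_one,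
        xf_L p β (k'+1) hp, it_right p β k' hp hkl _ (by omega)]
      omega

lemma iterate_p (n : ℤ) (hp : 3 ≤ p) : (xf p β)^[p] n = n := by
  obtain ⟨k, a, _, ha⟩ := cover p β n hp
  calc (xf p β)^[p] n = (xf p β)^[p] ((xf p β)^[a] (Lf p β k)) := by rw [ha]
    _ = (xf p β)^[p + a] (Lf p β k) := by rw [← Function.iterate_add_apply]
    _ = (xf p β)^[a + p] (Lf p β k) := by rw [add_comm]
    _ = (xf p β)^[a] ((xf p β)^[p] (Lf p β k)) := by rw [Function.iterate_add_apply]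
    _ = (xf p β)^[a] (Lf p β k) := by rw [iterA p β k hp]
    _ = n := ha


def lam (β : ℕ → Bool) (k : ℕ) : ℕ :=
  ((Finset.range (k+1)).filter (fun m => isL β m)).card

lemma not_isL_zero : ¬ isL β 0 := by
  rintro ⟨i, hi⟩
  have := lt_sfun β i
  omega

lemma lam_zero : lam β 0 = 0 := by
  unfold lam
  rw [Finset.card_eq_zero, Finset.filter_eq_empty_iff]
  intro m hm
  simp only [Finset.mem_range] at hm
  interval_cases m
  exact not_isL_zero β

lemma lam_succ (k : ℕ) :
    lam β (k+1) = lam β k + (if isL β (k+1) then 1 else 0) := by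
  unfold lam
  rw [Finset.range_add_one, Finset.filter_insert]
  split
  · rw [Finset.card_insert_of_notMem (by simp)]
  · simp

lemma Rf_formula (k : ℕ) : Rf p β k = ((p:ℤ)-1) * k - ((p:ℤ)-2) * (lam β k) := by
  induction k with
  | zero => simp [Rf_zero, lam_zero]
  | succ n ih =>
    rw [lam_succ]
    by_cases h : isL β (n+1)
    · rw [Rf_succ_left p β n h, ih, if_pos h]
      push_cast
      ring
    · rw [Rf_succ_right p β n h, ih, if_neg h]
      push_cast
      ring

lemma lam_eq (i k : ℕ) (h1 : sfun β i ≤ k) (h2 : k < sfun β (i+1)) :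
    lam β k = i + 1 := by
  have hmono := sfun_strictMono β
  have himg : (Finset.range (k+1)).filter (fun m => isL β m)
      = (Finset.range (i+1)).image (sfun β) := by
    ext m
    simp only [Finset.mem_filter, Finset.mem_range, Finset.mem_image]
    constructor
    · rintro ⟨hm, j, hj⟩
      refine ⟨j, ?_, hj⟩
      by_contra hji
      push_neg at hji
      have : sfun β (i+1) ≤ sfun β j := hmono.monotone hji
      omega
    · rintro ⟨j, hj, hjm⟩
      have : sfun β j ≤ sfun β i := hmono.monotone (by omega)
      exact ⟨by omega, j, hjm⟩
  rw [lam, himg, Finset.card_image_of_injective _ hmono.injective, Finset.card_range]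

lemma no_isL_between (i k : ℕ) (h1 : sfun β i < k) (h2 : k < sfun β (i+1)) :
    ¬ isL β k := by
  rintro ⟨j, hj⟩
  have hmono := sfun_strictMono β
  rcases le_or_gt j i with hji | hji
  · have := hmono.monotone hji
    omega
  · have := hmono.monotone (show i + 1 ≤ j by omega)
    omega

/-- The primitivity witness: every `dℤ`, `d ≥ 2`, contains a positive descent point. -/
lemma witness (d : ℕ) (hd : 2 ≤ d) (hp : 3 ≤ p) :
    ∃ v : ℤ, 0 < v ∧ (d:ℤ) ∣ v ∧ xf p β v = v - 1 := by
  have h3 : (3:ℤ) ≤ (p:ℤ) := by exact_mod_cast hp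
  have hi1 : 4 ≤ (p-1) * d := by
    have : 2 ≤ p - 1 := by omega
    calc 4 = 2 * 2 := by omega
    _ ≤ (p-1) * d := Nat.mul_le_mul this hd
  obtain ⟨i', hieq⟩ : ∃ i', i' + 1 = (p-1) * d := ⟨(p-1)*d - 1, by omega⟩
  set s0 := sfun β i' with hs0
  set s1 := sfun β (i'+1) with hs1
  have hmono := sfun_strictMono β
  have hss : s0 < s1 := hmono (by omega)
  -- gap size
  have hgap : s0 + 2*d + 2 ≤ s1 := by
    have h4 : i' + 4 ≤ 4 ^ (i'+1) := four_pow_ge i'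
    have h5 : 4 ^ (i'+2) = 4 * 4^(i'+1) := by ring
    have hb0 := bit_le (β i')
    have hb1 := bit_le (β (i'+1))
    have h2d : 2*d ≤ 2*(i'+1) := by
      have : d ≤ i' + 1 := by
        rw [hieq]
        calc d = 1 * d := (one_mul d).symm
        _ ≤ (p-1) * d := Nat.mul_le_mul (by omega) le_rfl
      omega
    simp only [hs0, hs1, sfun]
    omega
  have hiz : ((i' : ℤ) + 1) = ((p:ℤ)-1) * d := by
    have : ((i'+1 : ℕ) : ℤ) = (((p-1)*d : ℕ) : ℤ) := by rw [hieq]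
    push_cast [Nat.cast_sub (show 1 ≤ p by omega)] at this
    omega
  -- R values on the stretch
  have hRmid : ∀ m : ℕ, s0 ≤ m → m < s1 →
      Rf p β m = ((p:ℤ)-1) * m - ((p:ℤ)-2) * (i'+1) := by
    intro m hm1 hm2
    rw [Rf_formula p β m, lam_eq β i' m hm1 hm2]
    push_cast
    ring
  set A := Rf p β s0 with hA
  set B := Rf p β (s1 - 1) with hB
  have hAval : A = ((p:ℤ)-1) * s0 - ((p:ℤ)-2) * (i'+1) := hRmid s0 le_rfl hss
  have hBval : B = ((p:ℤ)-1) * (s1 - 1 : ℕ) - ((p:ℤ)-2) * (i'+1) :=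
    hRmid (s1-1) (by omega) (by omega)
  have hABgap : A + 2*d + 2 ≤ B := by
    rw [hAval, hBval]
    have hcast : ((s1 - 1 : ℕ) : ℤ) = (s1:ℤ) - 1 := by
      push_cast [Nat.cast_sub (by omega : 1 ≤ s1)]
      ring
    rw [hcast]
    have hsz : (s0:ℤ) + 2*d + 2 ≤ (s1:ℤ) := by exact_mod_cast hgap
    nlinarith [hsz, h3]
  have hApos : 0 ≤ A := Rf_nonneg p β hp s0
  have hdz : (0:ℤ) < (d:ℤ) := by exact_mod_cast (by omega : 0 < d)
  -- candidate multiples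
  set v1 : ℤ := A - A % d + d with hv1
  have hv1dvd : (d:ℤ) ∣ v1 := by
    refine Dvd.dvd.add ?_ dvd_rfl
    rw [Int.dvd_iff_emod_eq_zero, Int.sub_emod, Int.emod_emod_of_dvd _ dvd_rfl]
    simp
  have hmod := Int.emod_nonneg A (ne_of_gt hdz)
  have hmod2 := Int.emod_lt_of_pos A hdz
  have hv1range : A < v1 ∧ v1 ≤ A + d := by constructor <;> omega
  set v2 : ℤ := v1 + d with hv2
  have hv2dvd : (d:ℤ) ∣ v2 := by exact Dvd.dvd.add hv1dvd dvd_rfl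
  -- Bad form
  have hpick : ∃ v : ℤ, (d:ℤ) ∣ v ∧ A < v ∧ v ≤ B ∧
      ¬ ∃ m : ℕ, v = ((p:ℤ)-1) * m - ((p:ℤ)-2) * (i'+1) + 1 := by
    by_cases hpd : ((p:ℤ)-1) ∣ (d:ℤ)
    · refine ⟨v1, hv1dvd, hv1range.1, by omega, ?_⟩
      rintro ⟨m, hm⟩
      have hdvd1 : ((p:ℤ)-1) ∣ v1 := dvd_trans hpd hv1dvd
      have hdvd2 : ((p:ℤ)-1) ∣ v1 - 1 := by
        rw [hm, hiz]
        have : ((p:ℤ)-1) * m - ((p:ℤ)-2) * (((p:ℤ)-1)*d) + 1 - 1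
            = ((p:ℤ)-1) * (m - ((p:ℤ)-2)*d) := by ring
        rw [this]
        exact Dvd.intro _ rfl
      have : ((p:ℤ)-1) ∣ 1 := by
        have := Dvd.dvd.sub hdvd1 hdvd2
        simpa using this
      have := Int.le_of_dvd one_pos this
      omega
    · by_cases hb1 : ∃ m : ℕ, v1 = ((p:ℤ)-1) * m - ((p:ℤ)-2) * (i'+1) + 1
      · refine ⟨v2, hv2dvd, by omega, by omega, ?_⟩
        rintro ⟨m2, hm2⟩
        obtain ⟨m1, hm1⟩ := hb1
        apply hpd
        have : (d:ℤ) = ((p:ℤ)-1) * ((m2:ℤ) - m1) := by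
          have : v2 - v1 = (d:ℤ) := by omega
          rw [hm2, hm1] at this
          linarith [this]
        rw [this]
        exact Dvd.intro _ rfl
      · exact ⟨v1, hv1dvd, hv1range.1, by omega, hb1⟩
  obtain ⟨v, hvd, hvA, hvB, hvbad⟩ := hpick
  refine ⟨v, by omega, hvd, ?_⟩
  apply xf_D
  · intro k
    have := Lf_nonpos p β hp k
    omega
  · intro m hm
    rcases lt_or_ge m s0 with hms | hms
    · have : Rf p β m < Rf p β s0 := (Rf_strictMono p β hp) hms
      rw [← hA] at this
      omega
    · rcases lt_or_ge m (s1 - 1) with hms1 | hms1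
      · apply hvbad
        refine ⟨m, ?_⟩
        rw [← hm, hRmid m (by omega) (by omega)]
      · have : Rf p β (s1 - 1) ≤ Rf p β m := (Rf_strictMono p β hp).monotone hms1
        rw [← hB] at this
        omega


lemma isL_agree (β γ : ℕ → Bool) (i : ℕ) (hagree : ∀ j, j < i → β j = γ j)
    (m : ℕ) (hm : m < 4^(i+1)) : (isL β m ↔ isL γ m) := by
  have key : ∀ (α α' : ℕ → Bool), (∀ j, j < i → α j = α' j) → isL α m → isL α' m := by
    rintro α α' hag ⟨j, hj⟩
    have hji : j < i := by
      by_contra hji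
      push_neg at hji
      have h1 : 4^(i+1) ≤ 4^(j+1) := Nat.pow_le_pow_right (by norm_num) (by omega)
      have h2 : 4^(j+1) ≤ sfun α j := Nat.le_add_right _ _
      omega
    refine ⟨j, ?_⟩
    rw [← hj]
    unfold sfun
    rw [hag j hji]
  exact ⟨key β γ hagree, key γ β (fun j hj => (hagree j hj).symm)⟩

lemma LR_agree (β γ : ℕ → Bool) (k : ℕ) (h : ∀ m, m ≤ k → (isL β m ↔ isL γ m)) :
    LR p β k = LR p γ k := by
  induction k with
  | zero => rfl
  | succ n ih =>
    have ihn := ih (fun m hm => h m (by omega))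
    by_cases hl : isL β (n+1)
    · have hl' : isL γ (n+1) := (h (n+1) le_rfl).mp hl
      show LR p β (n+1) = LR p γ (n+1)
      unfold LR
      rw [if_pos hl, if_pos hl', ihn]
    · have hl' : ¬ isL γ (n+1) := fun hc => hl ((h (n+1) le_rfl).mpr hc)
      show LR p β (n+1) = LR p γ (n+1)
      unfold LR
      rw [if_neg hl, if_neg hl', ihn]

lemma xf_diff (β γ : ℕ → Bool) (i : ℕ) (hp : 3 ≤ p)
    (hagree : ∀ j, j < i → β j = γ j) (hβ : β i = false) (hγ : γ i = true) :
    xf p β ≠ xf p γ := by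
  have h3 : (3:ℤ) ≤ (p:ℤ) := by exact_mod_cast hp
  set k0 := 4^(i+1) with hk0
  have hk04 : 4 ≤ k0 := by
    calc 4 = 4^1 := rfl
    _ ≤ 4^(i+1) := Nat.pow_le_pow_right (by norm_num) (by omega)
  obtain ⟨k', hk'⟩ : ∃ k', k0 = k' + 1 := ⟨k0 - 1, by omega⟩
  -- β has a left step at k0, γ does not
  have hisLβ : isL β k0 := ⟨i, by simp [sfun, hβ, hk0]⟩
  have hnisLγ : ¬ isL γ k0 := by
    rintro ⟨j, hj⟩
    rcases lt_trichotomy j i with hji | hji | hji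
    · rw [show sfun γ j = sfun β j by unfold sfun; rw [hagree j hji]] at hj
      have : sfun β j < sfun β i := sfun_strictMono β hji
      have : sfun β i = k0 := by simp [sfun, hβ, hk0]
      omega
    · rw [hji] at hj
      have : sfun γ i = k0 + 1 := by simp [sfun, hγ, hk0]
      omega
    · have h1 : 4^(i+2) ≤ 4^(j+1) := Nat.pow_le_pow_right (by norm_num) (by omega)
      have h2 : 4^(j+1) ≤ sfun γ j := Nat.le_add_right _ _
      have h5 : 4 ^ (i + 2) = 4 * 4^(i+1) := by ring
      omega
  -- the L,R data agree before step k0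
  have hLR : LR p β k' = LR p γ k' := by
    apply LR_agree
    intro m hm
    exact isL_agree β γ i hagree m (by omega)
  have hLeq : Lf p β k' = Lf p γ k' := by unfold Lf; rw [hLR]
  intro hcon
  -- evaluate both at Lf β k' - 1
  set n := Lf p β k' - 1 with hn
  have hvβ : xf p β n = n - 1 := by
    have hLs := Lf_succ_left p β k' (by rw [← hk']; exact hisLβ)
    apply xf_descent_neg p β k' n hp (by omega) (by omega)
  have hvγ : xf p γ n = Rf p γ (k'+1) := by
    have hLs := Lf_succ_right p γ k' (by rw [← hk']; exact hnisLγ)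
    have : n = Lf p γ (k'+1) := by omega
    rw [this, xf_L p γ (k'+1) hp]
  rw [hcon] at hvβ
  have h1 := Rf_nonneg p γ hp (k'+1)
  have h2 := Lf_nonpos p β hp k'
  omega

lemma xf_injective (hp : 3 ≤ p) : Function.Injective (fun β => xf p β) := by
  intro β γ h
  by_contra hne
  have hex : ∃ i, β i ≠ γ i := by
    by_contra hc
    push_neg at hc
    exact hne (funext hc)
  classical
  set i := Nat.find hex with hi
  have hneq : β i ≠ γ i := Nat.find_spec hex
  have hagree : ∀ j, j < i → β j = γ j := by
    intro j hj
    by_contra hc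
    have := Nat.find_min' hex hc
    omega
  cases hbi : β i with
  | false =>
    have hgi : γ i = true := by
      cases hgi : γ i
      · exact absurd (hbi.trans hgi.symm) hneq
      · rfl
    exact xf_diff p β γ i hp hagree hbi hgi h
  | true =>
    have hgi : γ i = false := by
      cases hgi : γ i
      · rfl
      · exact absurd (hbi.trans hgi.symm) hneq
    exact xf_diff p γ β i hp (fun j hj => (hagree j hj).symm) hgi hbi h.symm


lemma xf_zero (hp : 3 ≤ p) : xf p β 0 = 0 := by
  have := xf_L p β 0 hp
  rw [Lf_zero, Rf_zero] at this
  exact this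

def xperm (hp : 3 ≤ p) : Equiv.Perm ℤ where
  toFun := xf p β
  invFun := (xf p β)^[p-1]
  left_inv := fun n => by
    have h : (xf p β)^[p-1] (xf p β n) = (xf p β)^[(p-1)+1] n :=
      (Function.iterate_succ_apply _ _ _).symm
    rw [h, show p - 1 + 1 = p by omega, iterate_p p β n hp]
  right_inv := fun n => by
    have h : xf p β ((xf p β)^[p-1] n) = (xf p β)^[(p-1)+1] n :=
      (Function.iterate_succ_apply' _ _ _).symm
    rw [h, show p - 1 + 1 = p by omega, iterate_p p β n hp]

def yperm (hp : 3 ≤ p) : Equiv.Perm ℤ where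
  toFun := fun n => xf p β n + 1
  invFun := fun n => xf p β n + 1
  left_inv := fun n => by
    show xf p β (xf p β n + 1) + 1 = n
    rw [keyE p β n hp]
    ring
  right_inv := fun n => by
    show xf p β (xf p β n + 1) + 1 = n
    rw [keyE p β n hp]
    ring

lemma xperm_apply (hp : 3 ≤ p) (n : ℤ) : xperm p β hp n = xf p β n := rfl
lemma yperm_apply (hp : 3 ≤ p) (n : ℤ) : yperm p β hp n = xf p β n + 1 := rfl

lemma xperm_pow (hp : 3 ≤ p) : (xperm p β hp) ^ p = 1 := by
  ext n
  rw [Equiv.Perm.one_apply, ← Equiv.Perm.iterate_eq_pow]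
  exact iterate_p p β n hp

lemma yperm_sq (hp : 3 ≤ p) : (yperm p β hp) ^ 2 = 1 := by
  ext n
  rw [Equiv.Perm.one_apply, ← Equiv.Perm.iterate_eq_pow,
    show (2:ℕ) = 1 + 1 from rfl, Function.iterate_add_apply]
  show yperm p β hp (yperm p β hp n) = n
  rw [yperm_apply, yperm_apply, keyE p β n hp]
  ring

def fmap (hp : 3 ≤ p) : Fin 2 → Equiv.Perm ℤ := ![xperm p β hp, yperm p β hp]

lemma lift_rels (hp : 3 ≤ p) :
    ∀ r ∈ triangleRels p 2, FreeGroup.lift (fmap p β hp) r = 1 := by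
  intro r hr
  simp only [triangleRels, Set.mem_insert_iff, Set.mem_singleton_iff] at hr
  rcases hr with rfl | rfl
  · rw [map_pow, FreeGroup.lift_apply_of]
    show (xperm p β hp) ^ p = 1
    exact xperm_pow p β hp
  · rw [map_pow, FreeGroup.lift_apply_of]
    show (yperm p β hp) ^ 2 = 1
    exact yperm_sq p β hp

def rho (hp : 3 ≤ p) : Tri p 2 →* Equiv.Perm ℤ :=
  PresentedGroup.toGroup (lift_rels p β hp)

lemma rho_X (hp : 3 ≤ p) : rho p β hp (triX p 2) = xperm p β hp := by
  have h := PresentedGroup.toGroup.of (lift_rels p β hp) (x := 0)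
  exact h

lemma rho_Y (hp : 3 ≤ p) : rho p β hp (triY p 2) = yperm p β hp := by
  have h := PresentedGroup.toGroup.of (lift_rels p β hp) (x := 1)
  exact h

lemma rho_XY_apply (hp : 3 ≤ p) (n : ℤ) :
    rho p β hp (triX p 2 * triY p 2) n = n - 1 := by
  rw [map_mul, rho_X, rho_Y, Equiv.Perm.mul_apply, yperm_apply, xperm_apply,
    keyE p β n hp]

lemma rho_Z_apply (hp : 3 ≤ p) (n : ℤ) : rho p β hp (triZ p 2) n = n + 1 := by
  have : rho p β hp (triZ p 2) = (rho p β hp (triX p 2 * triY p 2))⁻¹ := by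
    rw [triZ, map_inv]
  rw [this]
  rw [Equiv.Perm.inv_def, Equiv.symm_apply_eq, rho_XY_apply]
  ring

lemma rho_Zinv_apply (hp : 3 ≤ p) (n : ℤ) : rho p β hp (triZ p 2)⁻¹ n = n - 1 := by
  rw [map_inv, Equiv.Perm.inv_def, Equiv.symm_apply_eq, rho_Z_apply]
  ring

lemma rho_Zpow_apply (hp : 3 ≤ p) (k : ℤ) : ∀ n : ℤ,
    rho p β hp (triZ p 2 ^ k) n = n + k := by
  induction k using Int.induction_on with
  | zero => intro n; simp
  | succ m ih =>
    intro n
    rw [zpow_add_one, map_mul, Equiv.Perm.mul_apply, rho_Z_apply, ih]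
    ring
  | pred m ih =>
    intro n
    rw [zpow_sub_one, map_mul, Equiv.Perm.mul_apply, rho_Zinv_apply, ih]
    ring

def Mgrp (hp : 3 ≤ p) : Subgroup (Tri p 2) where
  carrier := {g | rho p β hp g 0 = 0}
  one_mem' := by simp
  mul_mem' := by
    intro a b ha hb
    simp only [Set.mem_setOf_eq] at *
    rw [map_mul, Equiv.Perm.mul_apply, hb, ha]
  inv_mem' := by
    intro a ha
    simp only [Set.mem_setOf_eq] at *
    rw [map_inv, Equiv.Perm.inv_def, Equiv.symm_apply_eq, ha]

lemma mem_Mgrp (hp : 3 ≤ p) (g : Tri p 2) : g ∈ Mgrp p β hp ↔ rho p β hp g 0 = 0 :=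
  Iff.rfl

lemma nonpara (hp : 3 ≤ p) : Nonparabolic (Mgrp p β hp) := by
  intro g hg hpar
  obtain ⟨k, c, hk, hgc⟩ := hpar
  rw [mem_Mgrp, hgc] at hg
  rw [map_mul, map_mul, Equiv.Perm.mul_apply, Equiv.Perm.mul_apply] at hg
  set m := rho p β hp c⁻¹ 0 with hm
  rw [rho_Zpow_apply p β hp k m] at hg
  have hcm : rho p β hp c m = 0 := by
    rw [hm, ← Equiv.Perm.mul_apply, ← map_mul, mul_inv_cancel, map_one]
    rfl
  have := (rho p β hp c).injective (hg.trans hcm.symm)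
  omega


lemma Mgrp_ne_top (hp : 3 ≤ p) : Mgrp p β hp ≠ ⊤ := by
  intro h
  have hz : triZ p 2 ∈ Mgrp p β hp := h ▸ Subgroup.mem_top _
  rw [mem_Mgrp] at hz
  rw [rho_Z_apply] at hz
  omega

lemma absorb (hp : 3 ≤ p) (N : Subgroup (Tri p 2)) (hMN : Mgrp p β hp ≤ N)
    (g n1 n2 : Tri p 2) (hn1 : n1 ∈ N) (hn2 : n2 ∈ N)
    (hg : rho p β hp g (rho p β hp n1 0) = rho p β hp n2 0) : g ∈ N := by
  have h1 : n2⁻¹ * g * n1 ∈ Mgrp p β hp := by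
    rw [mem_Mgrp, map_mul, map_mul, Equiv.Perm.mul_apply, Equiv.Perm.mul_apply, hg,
      map_inv, Equiv.Perm.inv_def]
    exact Equiv.symm_apply_apply _ _
  have h2 : n2⁻¹ * g * n1 ∈ N := hMN h1
  have hgeq : g = n2 * (n2⁻¹ * g * n1) * n1⁻¹ := by group
  rw [hgeq]
  exact N.mul_mem (N.mul_mem hn2 h2) (N.inv_mem hn1)

lemma zpow_mem_N (hp : 3 ≤ p) (N : Subgroup (Tri p 2)) (hMN : Mgrp p β hp ≤ N)
    (t : ℤ) (n1 : Tri p 2) (hn1 : n1 ∈ N) (ht : rho p β hp n1 0 = t) :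
    triZ p 2 ^ t ∈ N := by
  apply absorb p β hp N hMN _ 1 n1 N.one_mem hn1
  rw [map_one, Equiv.Perm.one_apply, rho_Zpow_apply, ht]
  ring

def Bsub (hp : 3 ≤ p) (N : Subgroup (Tri p 2)) (hMN : Mgrp p β hp ≤ N) :
    AddSubgroup ℤ where
  carrier := {t | ∃ n ∈ N, rho p β hp n 0 = t}
  zero_mem' := ⟨1, N.one_mem, by simp⟩
  add_mem' := by
    rintro a b ⟨na, hna, ha⟩ ⟨nb, hnb, hb⟩
    refine ⟨triZ p 2 ^ b * na, N.mul_mem (zpow_mem_N p β hp N hMN b nb hnb hb) hna, ?_⟩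
    rw [map_mul, Equiv.Perm.mul_apply, ha, rho_Zpow_apply]
  neg_mem' := by
    rintro a ⟨na, hna, ha⟩
    refine ⟨(triZ p 2 ^ a)⁻¹, N.inv_mem (zpow_mem_N p β hp N hMN a na hna ha), ?_⟩
    rw [← zpow_neg, rho_Zpow_apply]
    ring

lemma mem_Bsub (hp : 3 ≤ p) (N : Subgroup (Tri p 2)) (hMN : Mgrp p β hp ≤ N) (t : ℤ) :
    t ∈ Bsub p β hp N hMN ↔ ∃ n ∈ N, rho p β hp n 0 = t := Iff.rfl

lemma Mgrp_max (hp : 3 ≤ p) (N : Subgroup (Tri p 2)) (hMN : Mgrp p β hp < N) :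
    N = ⊤ := by
  have hle : Mgrp p β hp ≤ N := le_of_lt hMN
  obtain ⟨a, hBa⟩ := Int.subgroup_cyclic (Bsub p β hp N hle)
  have hmemB : ∀ t : ℤ, t ∈ Bsub p β hp N hle ↔ a ∣ t := by
    intro t
    rw [hBa, AddSubgroup.mem_closure_singleton]
    constructor
    · rintro ⟨n, rfl⟩; exact ⟨n, by rw [smul_eq_mul]; ring⟩
    · rintro ⟨n, rfl⟩; exact ⟨n, by rw [smul_eq_mul]; ring⟩
  obtain ⟨g0, hg0N, hg0M⟩ := SetLike.exists_of_lt hMN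
  have hb0 : rho p β hp g0 0 ≠ 0 := by
    intro h
    exact hg0M ((mem_Mgrp p β hp g0).mpr h)
  have hbB : rho p β hp g0 0 ∈ Bsub p β hp N hle := ⟨g0, hg0N, rfl⟩
  have ha0 : a ≠ 0 := by
    rintro rfl
    rw [hmemB] at hbB
    simp at hbB
    exact hb0 hbB
  have hXN : triX p 2 ∈ N := by
    apply absorb p β hp N hle _ 1 1 N.one_mem N.one_mem
    rw [map_one, Equiv.Perm.one_apply, rho_X, xperm_apply]
    exact xf_zero p β hp
  have haone : a.natAbs = 1 := by
    by_contra hane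
    have h2 : 2 ≤ a.natAbs := by
      have := Int.natAbs_eq_zero.not.mpr ha0
      omega
    obtain ⟨v, hv0, hvd, hvx⟩ := witness p β a.natAbs h2 hp
    have hvB : v ∈ Bsub p β hp N hle := (hmemB v).mpr (by rwa [Int.natAbs_dvd] at hvd)
    obtain ⟨nv, hnv, hnveq⟩ := hvB
    have hXnv : rho p β hp (triX p 2 * nv) 0 = v - 1 := by
      rw [map_mul, Equiv.Perm.mul_apply, hnveq, rho_X, xperm_apply, hvx]
    have hv1B : v - 1 ∈ Bsub p β hp N hle := ⟨_, N.mul_mem hXN hnv, hXnv⟩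
    have hd1 : a ∣ v - 1 := (hmemB _).mp hv1B
    have hdv : a ∣ v := (hmemB v).mp ⟨nv, hnv, hnveq⟩
    have hone : a ∣ 1 := by
      have := dvd_sub hdv hd1
      simpa using this
    have := Int.isUnit_iff.mp (isUnit_of_dvd_one hone)
    rcases this with h | h <;> rw [h] at hane <;> simp at hane
  have hu : IsUnit a := by
    apply Int.isUnit_iff.mpr
    rcases Int.natAbs_eq a with h | h <;> omega
  rw [eq_top_iff]
  intro g _
  have hgB : rho p β hp g 0 ∈ Bsub p β hp N hle := (hmemB _).mpr (hu.dvd)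
  obtain ⟨n, hnN, hneq⟩ := hgB
  have hng : n⁻¹ * g ∈ Mgrp p β hp := by
    rw [mem_Mgrp, map_mul, Equiv.Perm.mul_apply, ← hneq, map_inv, Equiv.Perm.inv_def]
    exact Equiv.symm_apply_apply _ _
  have : g = n * (n⁻¹ * g) := by group
  rw [this]
  exact N.mul_mem hnN (hle hng)

lemma Mgrp_coatom (hp : 3 ≤ p) : IsCoatom (Mgrp p β hp) :=
  ⟨Mgrp_ne_top p β hp, fun N hN => Mgrp_max p β hp N hN⟩

lemma Mgrp_inj (hp : 3 ≤ p) : Function.Injective (fun β => Mgrp p β hp) := by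
  intro β γ h0
  have h : Mgrp p β hp = Mgrp p γ hp := h0
  apply xf_injective p hp
  show xf p β = xf p γ
  funext n
  have hmem : triZ p 2 ^ (-(xf p β n)) * triX p 2 * triZ p 2 ^ n ∈ Mgrp p β hp := by
    rw [mem_Mgrp, map_mul, map_mul, Equiv.Perm.mul_apply, Equiv.Perm.mul_apply,
      rho_Zpow_apply, rho_X, xperm_apply, rho_Zpow_apply]
    norm_num
  rw [h] at hmem
  rw [mem_Mgrp, map_mul, map_mul, Equiv.Perm.mul_apply, Equiv.Perm.mul_apply,
    rho_Zpow_apply, rho_X, xperm_apply, rho_Zpow_apply] at hmem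
  simp only [zero_add] at hmem
  omega


instance : Countable (FreeGroup (Fin 2)) := FreeGroup.toWord_injective.countable

instance (p : ℕ) : Countable (Tri p 2) := Quotient.countable

lemma mem_map_conj {G : Type*} [Group G] (g x : G) (M : Subgroup G) :
    x ∈ Subgroup.map (MulAut.conj g).toMonoidHom M ↔ g⁻¹ * x * g ∈ M := by
  simp only [Subgroup.mem_map, MulEquiv.coe_toMonoidHom, MulAut.conj_apply]
  constructor
  · rintro ⟨m, hm, rfl⟩
    have e : g⁻¹ * (g * m * g⁻¹) * g = m := by group
    rw [e]
    exact hm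
  · intro h
    refine ⟨g⁻¹ * x * g, h, by group⟩

lemma conjRel_equiv {G : Type*} [Group G] (P : Subgroup G → Prop) :
    Equivalence (conjRel P) := by
  constructor
  · intro M
    refine ⟨1, ?_⟩
    ext x
    rw [mem_map_conj]
    have e : (1:G)⁻¹ * x * 1 = x := by group
    rw [e]
  · rintro M N ⟨g, hg⟩
    refine ⟨g⁻¹, ?_⟩
    ext x
    rw [mem_map_conj, hg, mem_map_conj]
    have e : g⁻¹ * (g⁻¹⁻¹ * x * g⁻¹) * g = x := by group
    rw [e]
  · rintro M N K ⟨g, hg⟩ ⟨h, hh⟩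
    refine ⟨h * g, ?_⟩
    ext x
    rw [hh, mem_map_conj, hg, mem_map_conj, mem_map_conj]
    have e : g⁻¹ * (h⁻¹ * x * h) * g = (h * g)⁻¹ * x * (h * g) := by group
    rw [e]

lemma map_conj_inj {G : Type*} [Group G] (g : G) {M N : Subgroup G}
    (h : Subgroup.map (MulAut.conj g).toMonoidHom M
       = Subgroup.map (MulAut.conj g).toMonoidHom N) : M = N := by
  ext x
  have hx := Subgroup.ext_iff.mp h (g * x * g⁻¹)
  rw [mem_map_conj, mem_map_conj] at hx
  have e : g⁻¹ * (g * x * g⁻¹) * g = x := by group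
  rwa [e] at hx

lemma uncount_nb : ¬ Countable (ℕ → Bool) := by
  intro h
  have hsc : Countable (Set ℕ) := by
    have e : Set ℕ ≃ (ℕ → Bool) := Equiv.arrowCongr (Equiv.refl ℕ) Equiv.propEquivBool
    exact Countable.of_equiv _ e.symm
  obtain ⟨f, hf⟩ := exists_injective_nat (Set ℕ)
  exact Function.cantor_injective f hf

end HK
end

/-- For each integer p ≥ 3, the Hecke group Δ(p,2,∞) ≅ C_p * C_2 has
uncountably many conjugacy classes of nonparabolic maximal subgroups. -/
theorem hecke_uncountably_many_nonparabolic_maximal (p : ℕ) (hp : 3 ≤ p) :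
    Uncountable (Quot (conjRel (fun M : Subgroup (Tri p 2) =>
      Nonparabolic M ∧ IsCoatom M))) := by
  rw [← not_countable_iff]
  intro hcount
  set P : Subgroup (Tri p 2) → Prop := fun M => Nonparabolic M ∧ IsCoatom M with hPdef
  let Φ : (ℕ → Bool) → {M : Subgroup (Tri p 2) // P M} :=
    fun β => ⟨HK.Mgrp p β hp, HK.nonpara p β hp, HK.Mgrp_coatom p β hp⟩
  have hΦinj : Function.Injective Φ := by
    intro b c h
    have hbc : HK.Mgrp p b hp = HK.Mgrp p c hp := congrArg Subtype.val h
    exact HK.Mgrp_inj p hp (show (fun β => HK.Mgrp p β hp) b = (fun β => HK.Mgrp p β hp) c from hbc)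
  let ψ : (ℕ → Bool) → Quot (conjRel P) := fun β => Quot.mk (conjRel P) (Φ β)
  haveI hfib : ∀ q, Countable {β : ℕ → Bool // ψ β = q} := by
    intro q
    by_cases hq : ∃ β0, ψ β0 = q
    · obtain ⟨β0, hβ0⟩ := hq
      have hrel : ∀ b : {β : ℕ → Bool // ψ β = q}, conjRel P (Φ b.1) (Φ β0) := by
        intro b
        have heq : ψ b.1 = ψ β0 := by rw [b.2, hβ0]
        exact ((HK.conjRel_equiv P).eqvGen_iff).mp (Quot.eq.mp heq)
      have hinj : Function.Injective
          (fun b : {β : ℕ → Bool // ψ β = q} => (hrel b).choose) := by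
        intro b c h
        have h' : (hrel b).choose = (hrel c).choose := h
        have hb := (hrel b).choose_spec
        have hc := (hrel c).choose_spec
        have e1 := congrArg (fun z : Tri p 2 =>
          Subgroup.map (MulAut.conj z).toMonoidHom ((Φ b.1 : Subgroup (Tri p 2)))) h'
        have e2 : Subgroup.map (MulAut.conj ((hrel c).choose)).toMonoidHom
              ((Φ b.1 : Subgroup (Tri p 2)))
            = Subgroup.map (MulAut.conj ((hrel c).choose)).toMonoidHom
              ((Φ c.1 : Subgroup (Tri p 2))) := by
          rw [← e1, ← hb]
          exact hc
        have := HK.map_conj_inj _ e2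
        exact Subtype.ext (hΦinj (Subtype.ext this))
      exact hinj.countable
    · haveI : IsEmpty {β : ℕ → Bool // ψ β = q} := ⟨fun b => hq ⟨b.1, b.2⟩⟩
      infer_instance
  have : Countable (ℕ → Bool) := Countable.of_equiv _ (Equiv.sigmaFiberEquiv ψ)
  exact HK.uncount_nb this
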